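/- Let A be an independent set in a graph G and B = V(G) − A. Let D be the digraph obtained from G by replacing each edge within B by a pair of opposite arcs, and orienting the edges between A and B arbitrarily. Then D is kernel-perfect. -/

import Mathlib

/-- If `A` is an independent set in a graph `G`, and `D` is the
digraph obtained from `G` by replacing each edge within `B = V(G) − A` by a
pair of opposite arcs and orienting each edge between `A` and `B` arbitrarily,
then `D` is kernel-perfect. -/
theorem bipartite_like_orientation_kernel_perfect {V : Type*}
    (G : SimpleGraph V) (A : Set V)
    (hA : ∀ u ∈ A, ∀ v ∈ A, ¬ G.Adj u v)
    (D : V → V → Prop)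
    (hsub : ∀ u v, D u v → G.Adj u v)
    (hBB : ∀ u v, u ∉ A → v ∉ A → (D u v ↔ G.Adj u v))
    (hAB : ∀ u v, G.Adj u v → ((u ∈ A ∧ v ∉ A) ∨ (u ∉ A ∧ v ∈ A)) →
      (D u v ∨ D v u) ∧ ¬ (D u v ∧ D v u)) :
    ∀ S : Set V, ∃ F : Set V, F ⊆ S ∧
      (∀ u ∈ F, ∀ v ∈ F, ¬ D u v) ∧
      (∀ v ∈ S, v ∉ F → ∃ u ∈ F, D v u) := by
  intro S
  classical
  -- The family of good sets: independent subsets of `S \ A` satisfying property (P):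
  -- every out-arc from a member into `A ∩ S` goes to a vertex that shoots back into the set.
  set 𝒮 : Set (Set V) := {M | M ⊆ S ∧ (∀ m ∈ M, m ∉ A) ∧
    (∀ m ∈ M, ∀ m' ∈ M, ¬ G.Adj m m') ∧
    (∀ m ∈ M, ∀ a, a ∈ A → a ∈ S → D m a → ∃ m' ∈ M, D a m')} with h𝒮
  have hempty : (∅ : Set V) ∈ 𝒮 := by
    refine ⟨Set.empty_subset _, ?_, ?_, ?_⟩ <;> simp
  have hchain : ∀ c ⊆ 𝒮, IsChain (· ⊆ ·) c → c.Nonempty → ∃ ub ∈ 𝒮, ∀ s ∈ c, s ⊆ ub := by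
    intro c hc hch _
    refine ⟨⋃₀ c, ⟨?_, ?_, ?_, ?_⟩, fun s hs => Set.subset_sUnion_of_mem hs⟩
    · rintro x ⟨s, hs, hx⟩
      exact (hc hs).1 hx
    · rintro m ⟨s, hs, hm⟩
      exact (hc hs).2.1 m hm
    · rintro m ⟨s, hs, hm⟩ m' ⟨s', hs', hm'⟩
      rcases hch.total hs hs' with h | h
      · exact (hc hs').2.2.1 m (h hm) m' hm'
      · exact (hc hs).2.2.1 m hm m' (h hm')
    · rintro m ⟨s, hs, hm⟩ a ha haS hDma
      obtain ⟨m', hm', hD⟩ := (hc hs).2.2.2 m hm a ha haS hDma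
      exact ⟨m', ⟨s, hs, hm'⟩, hD⟩
  obtain ⟨M, -, hM, hmax⟩ := zorn_subset_nonempty 𝒮 hchain ∅ hempty
  obtain ⟨hMS, hMA, hMind, hMP⟩ := hM
  -- The kernel: M together with the vertices of `A ∩ S` having no out-arc into `M`.
  set F : Set V := M ∪ {a | a ∈ A ∧ a ∈ S ∧ ¬ ∃ m ∈ M, D a m} with hF
  have hFS : F ⊆ S := by
    rintro x (hx | ⟨-, hx, -⟩)
    · exact hMS hx
    · exact hx
  refine ⟨F, hFS, ?_, ?_⟩
  · -- independence
    rintro u (hu | ⟨huA, huS, hu⟩) v hv hD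
    · rcases hv with hv | ⟨hvA, hvS, hv⟩
      · exact hMind u hu v hv (hsub _ _ hD)
      · -- u ∈ M, v ∈ A with no out-arc into M; but by (P), v shoots back into M
        obtain ⟨m', hm', hD'⟩ := hMP u hu v hvA hvS hD
        exact hv ⟨m', hm', hD'⟩
    · rcases hv with hv | ⟨hvA, hvS, hv⟩
      · exact hu ⟨v, hv, hD⟩
      · exact hA u huA v hvA (hsub _ _ hD)
  · -- absorption
    intro v hvS hvF
    by_cases hvA : v ∈ A
    · -- v ∈ A ∩ S, not in F: so v has an out-arc into M
      have : ¬ ¬ ∃ m ∈ M, D v m := fun h => hvF (Or.inr ⟨hvA, hvS, h⟩)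
      obtain ⟨m, hm, hD⟩ := not_not.mp this
      exact ⟨m, Or.inl hm, hD⟩
    · -- v ∈ S \ A, not in M: M ∪ {v} is not good by maximality
      have hvM : v ∉ M := fun h => hvF (Or.inl h)
      have hnot : insert v M ∉ 𝒮 := by
        intro h
        exact hvM (hmax h (Set.subset_insert v M) (Set.mem_insert v M))
      -- figure out which condition fails
      by_cases hadj : ∃ m ∈ M, G.Adj v m
      · obtain ⟨m, hm, h⟩ := hadj
        exact ⟨m, Or.inl hm, (hBB v m hvA (hMA m hm)).mpr h⟩
      · push_neg at hadj
        -- then property (P) must fail for v: v has an out-arc to some a ∈ A ∩ S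
        -- with no out-arc into insert v M, in particular a ∈ F.
        by_contra hcon
        push_neg at hcon
        apply hnot
        refine ⟨Set.insert_subset hvS hMS, ?_, ?_, ?_⟩
        · rintro m (rfl | hm)
          · exact hvA
          · exact hMA m hm
        · rintro m (rfl | hm) m' (rfl | hm')
          · exact fun h => G.loopless.irrefl _ h
          · exact hadj _ hm'
          · exact fun h => hadj _ hm h.symm
          · exact hMind _ hm _ hm'
        · rintro m (rfl | hm) a ha haS hD
          · -- arc v → a : show a has an out-arc into insert v M
            by_contra hno
            push_neg at hno
            have haF : a ∈ F := Or.inr ⟨ha, haS, by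
              rintro ⟨m', hm', hD'⟩
              exact hno m' (Or.inr hm') hD'⟩
            exact (hcon a haF) hD
          · obtain ⟨m', hm', hD'⟩ := hMP m hm a ha haS hD
            exact ⟨m', Or.inr hm', hD'⟩
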